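/- Let (X,d) be the metric space X = [0,∞) with d(x,y) = 0 if x = y, d(x,y) = 1/2^k if x ≠ y, ⌊x⌋ = ⌊y⌋ even, and x,y ∈ [L_{2k}, L_{2k+1}), and d(x,y) = 1 otherwise, where L_m = b_1+...+b_m, b_1 = 1, b_i = 2^{L_{i-1}}. Let f(x) = x + 1. Then for all distinct x, y ∈ (0,1) and all t ∈ (0, 1/2), limsup_{n→∞} (1/n)#{0 ≤ i < n : d(f^i x, f^i y) < t} = 1/2. -/

import Mathlib

open Filter Set
open scoped Classical

/-- `Lseq m = b₁ + ⋯ + b_m` where `b₁ = 1`, `b_i = 2^(b₁+⋯+b_{i-1})`;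
equivalently `Lseq 0 = 0`, `Lseq (m+1) = Lseq m + 2 ^ Lseq m`. -/
def Lseq : ℕ → ℕ
  | 0 => 0
  | m + 1 => Lseq m + 2 ^ Lseq m

/-- `bseq i = 2 ^ (L_{i-1})`, so `bseq 1 = 1`. -/
def bseq (i : ℕ) : ℕ := 2 ^ Lseq (i - 1)

/-- The three-valued distance of Example 1. -/
noncomputable def D (x y : ℝ) : ℝ :=
  if x = y then 0
  else if h : ∃ k : ℕ, ⌊x⌋ = ⌊y⌋ ∧ Even ⌊x⌋ ∧
      x ∈ Set.Ico ((Lseq (2 * k) : ℝ)) ((Lseq (2 * k + 1) : ℝ)) ∧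
      y ∈ Set.Ico ((Lseq (2 * k) : ℝ)) ((Lseq (2 * k + 1) : ℝ))
  then (1 / 2 : ℝ) ^ h.choose else 1


lemma Lseq_strictMono : StrictMono Lseq := by
  apply strictMono_nat_of_lt_succ
  intro n
  have : 0 < 2 ^ Lseq n := by positivity
  show Lseq n < Lseq n + 2 ^ Lseq n
  omega

lemma self_le_Lseq (m : ℕ) : m ≤ Lseq m := by
  induction m with
  | zero => simp [Lseq]
  | succ n ih =>
    have : 0 < 2 ^ Lseq n := by positivity
    simp only [Lseq]; omega

lemma Lseq_unique {i k k' : ℕ} (h1 : Lseq (2*k) ≤ i) (h2 : i < Lseq (2*k+1))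
    (h1' : Lseq (2*k') ≤ i) (h2' : i < Lseq (2*k'+1)) : k = k' := by
  by_contra hne
  rcases lt_or_gt_of_ne hne with h | h
  · exact absurd (le_trans (Lseq_strictMono.monotone (by omega : 2*k+1 ≤ 2*k')) h1') (by omega)
  · exact absurd (le_trans (Lseq_strictMono.monotone (by omega : 2*k'+1 ≤ 2*k)) h1) (by omega)

lemma card_even_range (n : ℕ) :
    ((Finset.range n).filter (fun i => Even i)).card = (n+1)/2 := by
  induction n with
  | zero => simp
  | succ n ih =>
    rw [Finset.range_add_one, Finset.filter_insert]
    by_cases h : Even n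
    · rw [if_pos h, Finset.card_insert_of_notMem (by simp), ih]
      rw [Nat.even_iff] at h; omega
    · rw [if_neg h, ih]
      rw [Nat.even_iff] at h; omega


lemma floor_add_nat_Ioo {x : ℝ} (hx : x ∈ Set.Ioo (0:ℝ) 1) (i : ℕ) : ⌊x + i⌋ = i := by
  rw [Int.floor_add_natCast, Int.floor_eq_zero_iff.2 ⟨hx.1.le, hx.2⟩, zero_add]

lemma D_eq_pow {x y : ℝ} (hx : x ∈ Set.Ioo (0:ℝ) 1) (hy : y ∈ Set.Ioo (0:ℝ) 1)
    (hxy : x ≠ y) {i k : ℕ} (hev : Even i) (h1 : Lseq (2*k) ≤ i) (h2 : i < Lseq (2*k+1)) :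
    D (x + i) (y + i) = (1/2 : ℝ) ^ k := by
  have hne : x + i ≠ y + i := fun h => hxy (by linarith)
  have hfx : ⌊x + (i:ℝ)⌋ = i := floor_add_nat_Ioo hx i
  have hfy : ⌊y + (i:ℝ)⌋ = i := floor_add_nat_Ioo hy i
  have hL1 : ((Lseq (2*k) : ℕ) : ℝ) ≤ (i:ℝ) := Nat.cast_le.2 h1
  have hL2 : ((i:ℝ) + 1) ≤ ((Lseq (2*k+1) : ℕ) : ℝ) := by exact_mod_cast h2
  have hmem : ∀ z : ℝ, z ∈ Set.Ioo (0:ℝ) 1 →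
      z + i ∈ Set.Ico ((Lseq (2 * k) : ℝ)) ((Lseq (2 * k + 1) : ℝ)) := by
    intro z hz
    exact ⟨by have := hz.1; linarith, by have := hz.2; linarith⟩
  have hex : ∃ k' : ℕ, ⌊x + (i:ℝ)⌋ = ⌊y + (i:ℝ)⌋ ∧ Even ⌊x + (i:ℝ)⌋ ∧
      x + (i:ℝ) ∈ Set.Ico ((Lseq (2 * k') : ℝ)) ((Lseq (2 * k' + 1) : ℝ)) ∧
      y + (i:ℝ) ∈ Set.Ico ((Lseq (2 * k') : ℝ)) ((Lseq (2 * k' + 1) : ℝ)) :=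
    ⟨k, by rw [hfx, hfy], by rw [hfx]; exact_mod_cast hev, hmem x hx, hmem y hy⟩
  rw [D, if_neg hne, dif_pos hex]
  congr 1
  obtain ⟨-, -, ⟨ha, hb⟩, -⟩ := hex.choose_spec
  set k' := hex.choose with hk'
  have h1' : Lseq (2*k') ≤ i := by
    have : ((Lseq (2*k') : ℕ) : ℝ) < (i:ℝ) + 1 := lt_of_le_of_lt ha (by have := hx.2; linarith)
    exact_mod_cast Nat.lt_succ_iff.mp (by exact_mod_cast this)
  have h2' : i < Lseq (2*k'+1) := by
    have : (i:ℝ) < ((Lseq (2*k'+1) : ℕ) : ℝ) := lt_of_lt_of_le (by have := hx.1; linarith) hb.le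
    exact_mod_cast this
  exact Lseq_unique h1' h2' h1 h2

lemma D_eq_one {x y : ℝ} (hx : x ∈ Set.Ioo (0:ℝ) 1) (hy : y ∈ Set.Ioo (0:ℝ) 1)
    (hxy : x ≠ y) {i : ℕ} (h : ¬ ∃ k, Even i ∧ Lseq (2*k) ≤ i ∧ i < Lseq (2*k+1)) :
    D (x + i) (y + i) = 1 := by
  have hne : x + i ≠ y + i := fun h => hxy (by linarith)
  rw [D, if_neg hne, dif_neg]
  rintro ⟨k, hfl, hev, ⟨ha, hb⟩, -⟩
  refine h ⟨k, ?_, ?_, ?_⟩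
  · rw [floor_add_nat_Ioo hx] at hev; exact_mod_cast hev
  · have : ((Lseq (2*k) : ℕ) : ℝ) < (i:ℝ) + 1 := lt_of_le_of_lt ha (by have := hx.2; linarith)
    exact Nat.lt_succ_iff.mp (by exact_mod_cast this)
  · have : (i:ℝ) < ((Lseq (2*k+1) : ℕ) : ℝ) := lt_of_lt_of_le (by have := hx.1; linarith) hb.le
    exact_mod_cast this

lemma D_lt_iff {x y : ℝ} (hx : x ∈ Set.Ioo (0:ℝ) 1) (hy : y ∈ Set.Ioo (0:ℝ) 1)
    (hxy : x ≠ y) {t : ℝ} (ht : t ∈ Set.Ioo (0:ℝ) (1/2)) (i : ℕ) :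
    D (x + i) (y + i) < t ↔
      ∃ k, Even i ∧ Lseq (2*k) ≤ i ∧ i < Lseq (2*k+1) ∧ (1/2 : ℝ) ^ k < t := by
  by_cases hex : ∃ k, Even i ∧ Lseq (2*k) ≤ i ∧ i < Lseq (2*k+1)
  · obtain ⟨k, hev, h1, h2⟩ := hex
    rw [D_eq_pow hx hy hxy hev h1 h2]
    constructor
    · intro hlt; exact ⟨k, hev, h1, h2, hlt⟩
    · rintro ⟨k', hev', h1', h2', hlt'⟩
      rwa [Lseq_unique h1 h2 h1' h2']
  · rw [D_eq_one hx hy hxy hex]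
    constructor
    · intro h; exfalso; have := ht.2; linarith
    · rintro ⟨k, hev, h1, h2, -⟩; exact absurd ⟨k, hev, h1, h2⟩ hex

lemma card_even_Ico (a b : ℕ) (hab : a ≤ b) :
    ((Finset.Ico a b).filter (fun i => Even i)).card = (b+1)/2 - (a+1)/2 := by
  have hsplit : Finset.range b = Finset.range a ∪ Finset.Ico a b := by
    rw [Finset.range_eq_Ico, ← Finset.Ico_union_Ico_eq_Ico (Nat.zero_le a) hab,
      ← Finset.range_eq_Ico]
  have hdisj : Disjoint ((Finset.range a).filter (fun i => Even i))
      ((Finset.Ico a b).filter (fun i => Even i)) := by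
    refine Disjoint.mono (Finset.filter_subset _ _) (Finset.filter_subset _ _) ?_
    rw [Finset.range_eq_Ico]
    exact Finset.Ico_disjoint_Ico_consecutive 0 a b
  have := card_even_range b
  rw [hsplit, Finset.filter_union, Finset.card_union_of_disjoint hdisj,
    card_even_range a] at this
  omega

lemma tendsto_aux : Tendsto (fun m : ℕ => ((m:ℝ)+2)/2^m) atTop (nhds 0) := by
  have h1 : Tendsto (fun n : ℕ => (n:ℝ) * (1/2)^n) atTop (nhds 0) :=
    tendsto_self_mul_const_pow_of_lt_one (by norm_num) (by norm_num)
  have h2 : Tendsto (fun n : ℕ => 2 * (1/2:ℝ)^n) atTop (nhds (2 * 0)) :=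
    (tendsto_pow_atTop_nhds_zero_of_lt_one (by norm_num) (by norm_num)).const_mul 2
  have h3 := h1.add h2
  simp only [mul_zero, add_zero] at h3
  refine h3.congr fun m => ?_
  rw [one_div, inv_pow, div_eq_mul_inv]
  ring

lemma tendsto_half : Tendsto (fun n : ℕ => ((n:ℝ)+1)/(2*n)) atTop (nhds (1/2)) := by
  have h0 : Tendsto (fun n : ℕ => 1/2 + (1/(n:ℝ))*(1/2)) atTop (nhds (1/2 + 0*(1/2))) :=
    tendsto_const_nhds.add (tendsto_one_div_atTop_nhds_zero_nat.mul_const _)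
  simp only [zero_mul, add_zero] at h0
  apply h0.congr'
  filter_upwards [eventually_ge_atTop 1] with n hn
  have hn' : (0:ℝ) < n := by exact_mod_cast hn
  show 1/2 + (1/(n:ℝ))*(1/2) = ((n:ℝ)+1)/(2*n)
  rw [eq_div_iff (by positivity : (2*(n:ℝ)) ≠ 0)]
  field_simp

lemma cast_bind_filter_card (p : ℝ → Prop) [DecidablePred p]
    [DecidablePred fun i : ℕ => p i] (n : ℕ) :
    (((Finset.range n : Finset ℕ) >>= fun a => (pure ((a : ℝ)) : Finset ℝ)).filter p).card
      = ((Finset.range n).filter (fun i : ℕ => p i)).card := by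
  have h1 : ((Finset.range n : Finset ℕ) >>= fun a => (pure ((a : ℝ)) : Finset ℝ))
      = (Finset.range n).image (fun a : ℕ => (a : ℝ)) := by
    show (Finset.range n).sup _ = _
    rw [Finset.sup_eq_biUnion]
    simp only [Finset.pure_def]
    exact Finset.biUnion_singleton
  rw [h1, Finset.filter_image, Finset.card_image_of_injective _ Nat.cast_injective]
  congr!


theorem stmt_14 :
    ∀ x ∈ Set.Ioo (0 : ℝ) 1, ∀ y ∈ Set.Ioo (0 : ℝ) 1, x ≠ y →
    ∀ t ∈ Set.Ioo (0 : ℝ) (1 / 2),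
    Filter.limsup (fun n : ℕ =>
      (((Finset.range n).filter (fun i => D (x + i) (y + i) < t)).card : ℝ) / n)
      Filter.atTop = 1 / 2 := by
  intro x hx y hy hxy t ht
  set P : ℕ → Prop :=
    fun i => ∃ k, Even i ∧ Lseq (2*k) ≤ i ∧ i < Lseq (2*k+1) ∧ (1/2 : ℝ) ^ k < t with hP
  have hcount : ∀ n : ℕ, (Finset.range n).filter (fun i : ℕ => D (x + i) (y + i) < t)
      = (Finset.range n).filter P := by
    intro n
    apply Finset.filter_congr
    intro i _
    exact D_lt_iff hx hy hxy ht i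
  have hrw : ∀ n : ℕ,
      (((Finset.range n).filter (fun i => D (x + i) (y + i) < t)).card : ℝ)
        = (((Finset.range n).filter P).card : ℝ) := by
    intro n
    rw [cast_bind_filter_card, hcount n]
  simp only [hrw]
  set u : ℕ → ℝ := fun n => (((Finset.range n).filter P).card : ℝ) / n with hu
  have hlb0 : ∀ n, 0 ≤ u n := fun n => by positivity
  have hub1 : ∀ n, u n ≤ 1 := by
    intro n
    rcases Nat.eq_zero_or_pos n with h | h
    · simp [hu, h]
    · have hc : (((Finset.range n).filter P).card : ℝ) ≤ n := by
        exact_mod_cast (Finset.card_filter_le _ _).trans (Finset.card_range n).le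
      have hn : (0:ℝ) < n := by exact_mod_cast h
      rw [hu, div_le_one hn]
      exact hc
  have hbdd : IsBoundedUnder (· ≤ ·) atTop u := isBoundedUnder_of ⟨1, hub1⟩
  have hcob : IsCoboundedUnder (· ≤ ·) atTop u :=
    (isBoundedUnder_of ⟨0, hlb0⟩ : IsBoundedUnder (· ≥ ·) atTop u).isCoboundedUnder_le
  apply le_antisymm
  · -- upper bound
    have hvb : IsBoundedUnder (· ≤ ·) atTop (fun n : ℕ => ((n:ℝ)+1)/(2*n)) :=
      tendsto_half.isBoundedUnder_le
    have hle : ∀ᶠ n in atTop, u n ≤ ((n:ℝ)+1)/(2*n) := by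
      filter_upwards [eventually_ge_atTop 1] with n hn
      have hpos : (0:ℝ) < n := by exact_mod_cast hn
      have hsub : (Finset.range n).filter P ⊆ (Finset.range n).filter (fun i => Even i) := by
        intro i hi
        simp only [Finset.mem_filter, hP] at hi ⊢
        obtain ⟨hr, k, hev, -⟩ := hi
        exact ⟨hr, hev⟩
      have hcard : ((Finset.range n).filter P).card ≤ (n+1)/2 :=
        (Finset.card_le_card hsub).trans_eq (card_even_range n)
      have h1 : (((Finset.range n).filter P).card : ℝ) ≤ (((n+1)/2 : ℕ) : ℝ) := by
        exact_mod_cast hcard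
      have h2 : ((((n:ℕ)+1)/2 : ℕ) : ℝ) ≤ ((n:ℝ)+1)/2 := by
        calc ((((n:ℕ)+1)/2 : ℕ) : ℝ) ≤ (((n:ℕ)+1 : ℕ):ℝ)/2 := Nat.cast_div_le
          _ = ((n:ℝ)+1)/2 := by push_cast; ring
      calc u n ≤ (((n:ℝ)+1)/2)/n := by
            simp only [hu]
            gcongr
            exact h1.trans h2
        _ = ((n:ℝ)+1)/(2*n) := by rw [div_div]
    calc limsup u atTop ≤ limsup (fun n : ℕ => ((n:ℝ)+1)/(2*n)) atTop :=
          limsup_le_limsup hle hcob hvb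
      _ = 1/2 := tendsto_half.limsup_eq
  · -- lower bound
    apply le_of_forall_sub_le
    intro ε hε
    apply le_limsup_of_frequently_le _ hbdd
    rw [frequently_atTop]
    intro N
    obtain ⟨K₀, hK₀⟩ := exists_pow_lt_of_lt_one ht.1 (by norm_num : (1/2:ℝ) < 1)
    have hev : ∀ᶠ (m:ℕ) in atTop, ((m:ℝ)+2)/2^m < ε := tendsto_aux.eventually (gt_mem_nhds hε)
    obtain ⟨M, hM⟩ := eventually_atTop.mp hev
    set k := max (max N M) K₀ with hk
    set a := Lseq (2*k) with ha
    set b := Lseq (2*k+1) with hb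
    have hab : a ≤ b := (Lseq_strictMono (by omega)).le
    have hb2 : b = a + 2^a := rfl
    have hkb : 2*k+1 ≤ b := self_le_Lseq _
    have hka : 2*k ≤ a := self_le_Lseq _
    have hNk : N ≤ k := le_trans (le_max_left N M) (le_max_left _ _)
    have hMk : M ≤ k := le_trans (le_max_right N M) (le_max_left _ _)
    refine ⟨b, by omega, ?_⟩
    have hsub : (Finset.Ico a b).filter (fun i => Even i) ⊆ (Finset.range b).filter P := by
      intro i hi
      simp only [Finset.mem_filter, Finset.mem_Ico, Finset.mem_range, hP] at hi ⊢
      obtain ⟨⟨h1, h2⟩, hevi⟩ := hi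
      refine ⟨h2, k, hevi, h1, h2, ?_⟩
      calc (1/2:ℝ)^k ≤ (1/2)^K₀ :=
            pow_le_pow_of_le_one (by norm_num) (by norm_num) (le_max_right _ _)
        _ < t := hK₀
    have hcard : (b+1)/2 - (a+1)/2 ≤ ((Finset.range b).filter P).card := by
      rw [← card_even_Ico a b hab]
      exact Finset.card_le_card hsub
    set c1 := (b+1)/2 with hc1d
    set c2 := (a+1)/2 with hc2d
    have hc21 : c2 ≤ c1 := Nat.div_le_div_right (by omega)
    have hc1 : (b:ℝ)/2 ≤ (c1:ℝ) := by
      have h : b ≤ 2 * c1 := by omega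
      have h' : (b:ℝ) ≤ 2 * (c1:ℝ) := by exact_mod_cast h
      linarith
    have hc2 : (c2:ℝ) ≤ ((a:ℝ)+1)/2 := by
      have h : 2 * c2 ≤ a + 1 := by omega
      have h' : 2 * (c2:ℝ) ≤ (a:ℝ) + 1 := by exact_mod_cast h
      linarith
    have hbR : (b:ℝ) = (a:ℝ) + 2^a := by rw [hb2]; push_cast; ring
    have h2a : (0:ℝ) < 2^(a:ℕ) := by positivity
    have haR : (0:ℝ) ≤ a := Nat.cast_nonneg a
    have hbRpos : (0:ℝ) < b := by rw [hbR]; linarith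
    have hMa : M ≤ a := by omega
    have hεa : ((a:ℝ)+2)/2^a < ε := hM a hMa
    have key : 1/2 - ε ≤ ((b:ℝ)/2 - ((a:ℝ)+1)/2)/b := by
      have expand : ((b:ℝ)/2 - ((a:ℝ)+1)/2)/b = 1/2 - ((a:ℝ)+1)/(2*b) := by
        field_simp
      have h1 : ((a:ℝ)+1)/(2*b) ≤ ((a:ℝ)+2)/2^a := by
        apply div_le_div₀ (by positivity) (by linarith) h2a
        rw [hbR]; linarith
      rw [expand]
      linarith
    have hcast : (((c1 - c2 : ℕ)):ℝ) = (c1:ℝ) - (c2:ℝ) := by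
      exact Nat.cast_sub hc21
    have hcardR : ((b:ℝ)/2 - ((a:ℝ)+1)/2) ≤ (((Finset.range b).filter P).card : ℝ) := by
      have h : ((c1 - c2 : ℕ):ℝ) ≤ (((Finset.range b).filter P).card : ℝ) := by
        exact_mod_cast hcard
      rw [hcast] at h
      linarith
    have hfin : ((b:ℝ)/2 - ((a:ℝ)+1)/2)/(b:ℝ) ≤ u b := by
      simp only [hu]
      gcongr
    linarith [key, hfin]
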